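/- Fix n ∈ ℕ, x₀ : Fin n → ℝ, curves g, h : ℝ → Matrix (Fin n) (Fin n) ℝ, and maps ρG, ρH : (Fin n → ℝ) → Matrix (Fin n) (Fin n) ℝ. Define x̄(t) = g(t) *ᵥ (h(t) *ᵥ x₀). Suppose that for every t: (i) g has derivative ρG(x̄(t)) * g(t) at t; (ii) h has derivative ρH(x̄(t)) * h(t) at t; and (iii) g(t) commutes with ρH(x̄(t)), i.e., g(t) * ρH(x̄(t)) = ρH(x̄(t)) * g(t). Then for every t, x̄ has derivative ρG(x̄(t)) *ᵥ x̄(t) + ρH(x̄(t)) *ᵥ x̄(t) at t. -/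

import Mathlib

open Matrix

-- Norm instances on square matrices (the `L∞`-operator norm); note that all norms on
-- the finite-dimensional space of `n × n` real matrices induce the same notion of derivative.
attribute [local instance] Matrix.linftyOpNormedRing Matrix.linftyOpNormedAlgebra

/-- Product reconstruction for linear matrix actions on `ℝⁿ`: if `ġ = ρG(xbar)·g`,
`ḣ = ρH(xbar)·h`, the actions commute along the trajectory, and
`xbar(t) = g(t) *ᵥ (h(t) *ᵥ x₀)`, then `xbar` is an integral curve of the product
approximated dynamics `ρG(xbar) *ᵥ xbar + ρH(xbar) *ᵥ xbar`. -/
theorem product_reconstruction_linear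
    (n : ℕ) (x₀ : Fin n → ℝ)
    (g h : ℝ → Matrix (Fin n) (Fin n) ℝ)
    (ρG ρH : (Fin n → ℝ) → Matrix (Fin n) (Fin n) ℝ)
    (xbar : ℝ → Fin n → ℝ) (hxbar : ∀ t, xbar t = g t *ᵥ (h t *ᵥ x₀))
    (hg : ∀ t, HasDerivAt g (ρG (xbar t) * g t) t)
    (hh : ∀ t, HasDerivAt h (ρH (xbar t) * h t) t)
    (hcomm : ∀ t, g t * ρH (xbar t) = ρH (xbar t) * g t) :
    ∀ t, HasDerivAt xbar (ρG (xbar t) *ᵥ xbar t + ρH (xbar t) *ᵥ xbar t) t := by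
  intro t
  have hgh : HasDerivAt (fun s => g s * h s)
      (ρG (xbar t) * g t * h t + g t * (ρH (xbar t) * h t)) t := (hg t).mul (hh t)
  let L : Matrix (Fin n) (Fin n) ℝ →L[ℝ] (Fin n → ℝ) :=
    { toLinearMap :=
        { toFun := fun M => M *ᵥ x₀
          map_add' := fun M N => Matrix.add_mulVec M N x₀
          map_smul' := fun c M => Matrix.smul_mulVec c M x₀ }
      cont := by
        exact LinearMap.continuous_of_finiteDimensional (LinearMap.mk ⟨fun M : Matrix (Fin n) (Fin n) ℝ => M *ᵥ x₀, fun M N => Matrix.add_mulVec M N x₀⟩ fun c M => Matrix.smul_mulVec c M x₀ : Matrix (Fin n) (Fin n) ℝ →ₗ[ℝ] (Fin n → ℝ)) }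
  have key : HasDerivAt (fun s => L (g s * h s)) (L (ρG (xbar t) * g t * h t + g t * (ρH (xbar t) * h t))) t :=
    L.hasFDerivAt.comp_hasDerivAt t hgh
  have hx : ∀ s, xbar s = L (g s * h s) := by
    intro s
    simp [L, hxbar s, Matrix.mulVec_mulVec]
  have hfun : xbar = fun s => L (g s * h s) := funext hx
  rw [hfun]
  convert key using 1
  simp only [L, ContinuousLinearMap.coe_mk', LinearMap.coe_mk, AddHom.coe_mk,
    Matrix.add_mulVec, ← Matrix.mulVec_mulVec]
  rw [← hxbar t]
  congr 1
  rw [Matrix.mulVec_mulVec, hcomm t, ← Matrix.mulVec_mulVec, ← hxbar t]
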